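/- arXiv:2012.00574 — 7 statements merged into one kernel-verified Lean document; each statement's English description precedes it below -/
import Mathlib

section
/- Let V_1, ..., V_k (k ≥ 1) be vector spaces each of dimension 2 over an algebraically closed field of characteristic 0. Let a = a_1 ⊗ ... ⊗ a_k and b = b_1 ⊗ ... ⊗ b_k be simple tensors with a_i, b_i linearly independent in V_i for every i. Then the affine tangent spaces T_a and T_b to the Segre cone at a and b satisfy dim(T_a + T_b) = min(2(k+1), 2^k); in particular for k ≥ 3 they intersect trivially (T_a ∩ T_b = 0). -/
open scoped TensorProduct
open Module

/-- The affine tangent space to the Segre cone at the simple tensor `⨂ₜ i, v i`. -/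
noncomputable def segreTangent (K : Type*) [Field K] {ι : Type*} [DecidableEq ι]
    (V : ι → Type*) [∀ i, AddCommGroup (V i)] [∀ i, Module K (V i)] (v : ∀ i, V i) :
    Submodule K (⨂[K] i, V i) :=
  Submodule.span K
    {t | ∃ (i : ι) (w : V i), t = PiTensorProduct.tprod K (Function.update v i w)}

private lemma two_mul_succ_le_two_pow {k : ℕ} (hk : 3 ≤ k) : 2 * (k + 1) ≤ 2 ^ k := by
  induction k, hk using Nat.le_induction with
  | base => norm_num
  | succ k hk ih =>
    have h2 : 2 ≤ 2 ^ k := Nat.one_lt_two_pow_iff.2 (by omega)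
    rw [pow_succ]
    omega

/-- for `k ≥ 1` vector spaces of dimension `2` over an algebraically
closed field of characteristic `0`, and simple tensors `a = a₁⊗...⊗a_k`,
`b = b₁⊗...⊗b_k` with `a i, b i` linearly independent for every `i`, the affine
tangent spaces to the Segre cone at `a` and `b` satisfy
`dim (T_a + T_b) = min (2(k+1)) (2^k)`; in particular for `k ≥ 3` they intersect
trivially. -/
theorem stmt1 {K : Type*} [Field K] [IsAlgClosed K] [CharZero K] {k : ℕ} (hk : 1 ≤ k)
    (V : Fin k → Type*) [∀ i, AddCommGroup (V i)] [∀ i, Module K (V i)]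
    [∀ i, FiniteDimensional K (V i)] (hdim : ∀ i, finrank K (V i) = 2)
    (a b : ∀ i, V i) (hab : ∀ i, LinearIndependent K ![a i, b i]) :
    finrank K ↥(segreTangent K V a ⊔ segreTangent K V b) = min (2 * (k + 1)) (2 ^ k)
      ∧ (3 ≤ k → segreTangent K V a ⊓ segreTangent K V b = ⊥) := by
  classical
  have i₀ : Fin k := ⟨0, hk⟩
  -- bases of the factors
  let c : ∀ i, Basis (Fin 2) K (V i) := fun i =>
    basisOfLinearIndependentOfCardEqFinrank (hab i) (by simp [hdim i])
  have hc0 : ∀ i, c i 0 = a i := fun i => by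
    simp [c, coe_basisOfLinearIndependentOfCardEqFinrank]
  have hc1 : ∀ i, c i 1 = b i := fun i => by
    simp [c, coe_basisOfLinearIndependentOfCardEqFinrank]
  -- the product basis family
  let e : (Fin k → Fin 2) → ⨂[K] i, V i := fun g => PiTensorProduct.tprod K fun i => c i (g i)
  -- dual evaluations
  have heval : ∀ f g : Fin k → Fin 2,
      PiTensorProduct.lift ((MultilinearMap.mkPiAlgebra K (Fin k) K).compLinearMap
        fun i => (c i).coord (f i)) (e g) = if g = f then 1 else 0 := by
    intro f g
    show PiTensorProduct.lift _ (PiTensorProduct.tprod K fun i => c i (g i)) = _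
    rw [PiTensorProduct.lift.tprod]
    simp only [MultilinearMap.compLinearMap_apply, MultilinearMap.mkPiAlgebra_apply]
    have h1 : ∀ i : Fin k, (c i).coord (f i) (c i (g i)) = if g i = f i then 1 else 0 := by
      intro i
      rw [Basis.coord_apply, Basis.repr_self, Finsupp.single_apply]
    rw [Finset.prod_congr rfl fun i _ => h1 i]
    rcases eq_or_ne g f with rfl | hgf
    · simp
    · obtain ⟨i, hi⟩ := Function.ne_iff.1 hgf
      rw [if_neg hgf]
      exact Finset.prod_eq_zero (Finset.mem_univ i) (if_neg hi)
  have hli : LinearIndependent K e := by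
    rw [Fintype.linearIndependent_iff]
    intro x hx f
    have hcong := congrArg (PiTensorProduct.lift
      ((MultilinearMap.mkPiAlgebra K (Fin k) K).compLinearMap
        fun i => (c i).coord (f i))) hx
    simp only [map_sum, map_smul, heval, map_zero, smul_eq_mul, mul_ite, mul_one, mul_zero,
      Finset.sum_ite_eq', Finset.mem_univ, if_true] at hcong
    exact hcong
  have hsp : ⊤ ≤ Submodule.span K (Set.range e) := by
    rw [← PiTensorProduct.span_tprod_eq_top (R := K) (s := V), Submodule.span_le]
    rintro t ⟨v, rfl⟩
    have hv : PiTensorProduct.tprod K v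
        = PiTensorProduct.tprod K fun i => ∑ j : Fin 2, (c i).repr (v i) j • c i j := by
      congr 1
      funext i
      exact ((c i).sum_repr (v i)).symm
    rw [hv, MultilinearMap.map_sum]
    apply Submodule.sum_mem
    intro r _
    rw [MultilinearMap.map_smul_univ]
    exact Submodule.smul_mem _ _ (Submodule.subset_span ⟨r, rfl⟩)
  let B : Basis (Fin k → Fin 2) K (⨂[K] i, V i) := Basis.mk hli hsp
  -- the tangent space at a basis-product point
  let sw : Fin 2 → Fin 2 := fun x => x + 1
  have hsw : ∀ j y : Fin 2, j ≠ y → j = sw y := by decide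
  let fp : (Fin k → Fin 2) → Option (Fin k) → (Fin k → Fin 2) := fun p o =>
    o.elim p fun i => Function.update p i (sw (p i))
  have key : ∀ p : Fin k → Fin 2,
      segreTangent K V (fun i => c i (p i))
        = Submodule.span K (Set.range fun o => e (fp p o)) := by
    intro p
    set v : ∀ i, V i := fun i => c i (p i) with hvdef
    have hupd : ∀ (i : Fin k) (j : Fin 2),
        Function.update v i (c i j) = fun i' => c i' (Function.update p i j i') := by
      intro i j
      funext i'
      rcases eq_or_ne i' i with rfl | hne
      · simp
      · rw [Function.update_of_ne hne, Function.update_of_ne hne]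
    apply le_antisymm
    · unfold segreTangent
      rw [Submodule.span_le]
      rintro t ⟨i, w, rfl⟩
      have hw : w = (c i).repr w 0 • c i 0 + (c i).repr w 1 • c i 1 := by
        have h := (c i).sum_repr w
        rw [Fin.sum_univ_two] at h
        exact h.symm
      have hmem : ∀ j : Fin 2, PiTensorProduct.tprod K (Function.update v i (c i j)) ∈
          Submodule.span K (Set.range fun o => e (fp p o)) := by
        intro j
        rw [hupd]
        rcases eq_or_ne j (p i) with rfl | hj
        · rw [Function.update_eq_self]
          exact Submodule.subset_span ⟨none, rfl⟩
        · rw [hsw j (p i) hj]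
          exact Submodule.subset_span ⟨some i, rfl⟩
      rw [hw, MultilinearMap.map_update_add, MultilinearMap.map_update_smul,
        MultilinearMap.map_update_smul]
      exact Submodule.add_mem _ (Submodule.smul_mem _ _ (hmem 0)) (Submodule.smul_mem _ _ (hmem 1))
    · rw [Submodule.span_le]
      rintro t ⟨o, rfl⟩
      apply Submodule.subset_span
      rcases o with _ | i
      · exact ⟨i₀, v i₀, by rw [Function.update_eq_self]; rfl⟩
      · exact ⟨i, c i (sw (p i)), by rw [hupd]; rfl⟩
  let p0 : Fin k → Fin 2 := fun _ => 0
  let p1 : Fin k → Fin 2 := fun _ => 1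
  have hTa : segreTangent K V a = Submodule.span K (Set.range fun o => e (fp p0 o)) := by
    have h := key p0
    rwa [show (fun i => c i (p0 i)) = a from funext fun i => hc0 i] at h
  have hTb : segreTangent K V b = Submodule.span K (Set.range fun o => e (fp p1 o)) := by
    have h := key p1
    rwa [show (fun i => c i (p1 i)) = b from funext fun i => hc1 i] at h
  let F : Option (Fin k) ⊕ Option (Fin k) → (Fin k → Fin 2) := Sum.elim (fp p0) (fp p1)
  have hsup : segreTangent K V a ⊔ segreTangent K V b
      = Submodule.span K (Set.range fun z => e (F z)) := by
    rw [hTa, hTb, ← Submodule.span_union]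
    congr 1
    rw [show (fun z => e (F z))
        = Sum.elim (fun o => e (fp p0 o)) (fun o => e (fp p1 o)) from
      funext (by rintro (o | o) <;> rfl)]
    exact (Set.Sum.elim_range _ _).symm
  -- coordinate values
  have hval0 : ∀ i j : Fin k, fp p0 (some i) j = if j = i then 1 else 0 := by
    intro i j
    rcases eq_or_ne j i with rfl | hne
    · simp [fp, sw, p0]
    · simp [fp, Function.update_of_ne hne, p0, hne]
  have hval1 : ∀ i j : Fin k, fp p1 (some i) j = if j = i then 0 else 1 := by
    intro i j
    rcases eq_or_ne j i with rfl | hne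
    · simp [fp, sw, p1]
    · simp [fp, Function.update_of_ne hne, p1, hne]
  rcases le_or_gt k 2 with hk2 | hk3
  · -- low-dimensional case : the sum is everything
    have htop : Submodule.span K (Set.range fun z => e (F z)) = ⊤ := by
      apply top_unique
      refine le_trans hsp (Submodule.span_le.2 ?_)
      rintro x ⟨g, rfl⟩
      suffices h : ∃ z, F z = g by
        obtain ⟨z, hz⟩ := h
        exact Submodule.subset_span ⟨z, congrArg e hz⟩
      by_cases h1 : ∀ j, g j = 0
      · exact ⟨Sum.inl none, funext fun j => (h1 j).symm⟩
      · push_neg at h1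
        obtain ⟨i, hi⟩ := h1
        have hgi : g i = 1 := Fin.eq_one_of_ne_zero _ hi
        by_cases h2 : ∀ j, j ≠ i → g j = 0
        · refine ⟨Sum.inl (some i), funext fun j => ?_⟩
          show fp p0 (some i) j = g j
          rw [hval0]
          rcases eq_or_ne j i with rfl | hne
          · rw [if_pos rfl, hgi]
          · rw [if_neg hne, h2 j hne]
        · push_neg at h2
          obtain ⟨i', hne', hi'⟩ := h2
          have hgi' : g i' = 1 := Fin.eq_one_of_ne_zero _ hi'
          refine ⟨Sum.inr none, funext fun j => ?_⟩
          show p1 j = g j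
          have hj : j = i ∨ j = i' := by
            by_contra hcon
            push_neg at hcon
            have hcard : ({i, i', j} : Finset (Fin k)).card = 3 := by
              rw [Finset.card_insert_of_notMem (by simp [hne'.symm, Ne.symm hcon.1]),
                Finset.card_insert_of_notMem (by simp [Ne.symm hcon.2]),
                Finset.card_singleton]
            have hle := Finset.card_le_univ ({i, i', j} : Finset (Fin k))
            rw [hcard, Fintype.card_fin] at hle
            omega
          rcases hj with rfl | rfl
          · exact hgi.symm
          · exact hgi'.symm
    constructor
    · rw [hsup, htop, finrank_top, finrank_eq_card_basis B,
        show Fintype.card (Fin k → Fin 2) = 2 ^ k by simp]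
      have : k = 1 ∨ k = 2 := by omega
      rcases this with rfl | rfl <;> norm_num
    · intro h3
      omega
  · -- case k ≥ 3
    have hk3' : 3 ≤ k := hk3
    have pick : ∀ i j : Fin k, ∃ m : Fin k, m ≠ i ∧ m ≠ j := by
      intro i j
      by_contra hcon
      push_neg at hcon
      have hsub : (Finset.univ : Finset (Fin k)) ⊆ {i, j} := by
        intro m _
        rcases eq_or_ne m i with rfl | hne
        · simp
        · simp [hcon m hne]
      have hle := Finset.card_le_card hsub
      have h2 : ({i, j} : Finset (Fin k)).card ≤ 2 :=
        le_trans (Finset.card_insert_le _ _) (by simp)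
      rw [Finset.card_univ, Fintype.card_fin] at hle
      omega
    have hcross : ∀ o o', fp p0 o ≠ fp p1 o' := by
      rintro (_ | i) (_ | j) h
      · have h0 := congrFun h i₀
        simp [fp, p0, p1] at h0
      · obtain ⟨m, _, hmj⟩ := pick j j
        have h0 := congrFun h m
        rw [show fp p0 none m = 0 from rfl, hval1, if_neg hmj] at h0
        exact absurd h0 (by decide)
      · obtain ⟨m, hmi, _⟩ := pick i i
        have h0 := congrFun h m
        rw [hval0, if_neg hmi, show fp p1 none m = 1 from rfl] at h0
        exact absurd h0 (by decide)
      · obtain ⟨m, hmi, hmj⟩ := pick i j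
        have h0 := congrFun h m
        rw [hval0, if_neg hmi, hval1, if_neg hmj] at h0
        exact absurd h0 (by decide)
    have hinj0 : Function.Injective (fp p0) := by
      rintro (_ | i) (_ | i') h
      · rfl
      · have h0 := congrFun h i'
        rw [show fp p0 none i' = 0 from rfl, hval0, if_pos rfl] at h0
        exact absurd h0 (by decide)
      · have h0 := congrFun h i
        rw [hval0, if_pos rfl, show fp p0 none i = 0 from rfl] at h0
        exact absurd h0 (by decide)
      · rcases eq_or_ne i i' with rfl | hne
        · rfl
        · have h0 := congrFun h i
          rw [hval0, if_pos rfl, hval0, if_neg hne] at h0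
          exact absurd h0 (by decide)
    have hinj1 : Function.Injective (fp p1) := by
      rintro (_ | i) (_ | i') h
      · rfl
      · have h0 := congrFun h i'
        rw [show fp p1 none i' = 1 from rfl, hval1, if_pos rfl] at h0
        exact absurd h0 (by decide)
      · have h0 := congrFun h i
        rw [hval1, if_pos rfl, show fp p1 none i = 1 from rfl] at h0
        exact absurd h0 (by decide)
      · rcases eq_or_ne i i' with rfl | hne
        · rfl
        · have h0 := congrFun h i
          rw [hval1, if_pos rfl, hval1, if_neg hne] at h0
          exact absurd h0 (by decide)
    have hinj : Function.Injective F := Function.Injective.sumElim hinj0 hinj1 hcross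
    have hli2 : LinearIndependent K fun z => e (F z) := hli.comp F hinj
    constructor
    · rw [hsup, finrank_span_eq_card hli2]
      rw [min_eq_left (two_mul_succ_le_two_pow hk3')]
      simp [Fintype.card_sum, Fintype.card_option, Fintype.card_fin]
      omega
    · intro _
      rw [hTa, hTb]
      have hd : Disjoint (Set.range (fp p0)) (Set.range (fp p1)) := by
        rw [Set.disjoint_left]
        rintro g ⟨o, rfl⟩ ⟨o', h⟩
        exact hcross o o' h.symm
      have hdsp := hli.disjoint_span_image hd
      rw [← Set.range_comp, ← Set.range_comp] at hdsp
      exact disjoint_iff.mp hdsp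
end

section
/- Let V_1, ..., V_k be finite-dimensional vector spaces with dim V_i ≥ 2, and fix an index i. Suppose p_1, ..., p_r are nonzero simple tensors in V_1 ⊗ ... ⊗ V_k whose images under the projection forgetting the i-th factor (i.e., the simple tensors obtained by deleting the i-th tensor factor) are pairwise distinct simple tensors q_1, ..., q_r in the tensor product of the remaining spaces, and that the affine tangent spaces to the Segre cone of the remaining factors at q_1, ..., q_r are linearly independent (their sum is direct of dimension r(1 + Σ_{j≠i}(dim V_j − 1))). Then the affine tangent spaces to the Segre cone of V_1 ⊗ ... ⊗ V_k at p_1, ..., p_r are also linearly independent. -/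
open scoped TensorProduct
open Module

namespace Stmt5

set_option linter.unusedSectionVars false

variable {K : Type*} [Field K]

lemma exists_dual_eq_one {V : Type*} [AddCommGroup V] [Module K V] {v : V} (hv : v ≠ 0) :
    ∃ f : V →ₗ[K] K, f v = 1 := by
  obtain ⟨q, hq⟩ := (K ∙ v).exists_isCompl
  refine ⟨(LinearEquiv.coord K V v hv).toLinearMap ∘ₗ
      Submodule.linearProjOfIsCompl _ q hq, ?_⟩
  have h1 : (Submodule.linearProjOfIsCompl _ q hq) v
      = ⟨v, Submodule.mem_span_singleton_self v⟩ :=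
    Submodule.linearProjOfIsCompl_apply_left hq ⟨v, Submodule.mem_span_singleton_self v⟩
  simp [h1, LinearEquiv.coord_self]

lemma tprod_ne_zero {ι : Type*} [Fintype ι] {V : ι → Type*} [∀ i, AddCommGroup (V i)]
    [∀ i, Module K (V i)] {v : ∀ i, V i} (hv : ∀ j, v j ≠ 0) :
    PiTensorProduct.tprod K v ≠ 0 := by
  choose f hf using fun j => exists_dual_eq_one (K := K) (hv j)
  intro h
  have h2 := congrArg (PiTensorProduct.lift ((MultilinearMap.mkPiAlgebra K ι K).compLinearMap f)) h
  rw [PiTensorProduct.lift.tprod, map_zero, MultilinearMap.compLinearMap_apply,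
    MultilinearMap.mkPiAlgebra_apply] at h2
  simp [hf] at h2

lemma finrank_iSup_le_sum {ι : Type*} [Fintype ι] {M : Type*} [AddCommGroup M] [Module K M]
    (p : ι → Submodule K M) [∀ i, FiniteDimensional K (p i)] :
    finrank K ↥(⨆ i, p i) ≤ ∑ i, finrank K ↥(p i) := by
  classical
  have H : ∀ s : Finset ι, finrank K ↥(⨆ i ∈ s, p i) ≤ ∑ i ∈ s, finrank K ↥(p i) := by
    intro s
    induction s using Finset.induction_on with
    | empty => simp
    | insert _ _ ha ih =>
      rename_i a s
      rw [Finset.iSup_insert, Finset.sum_insert ha]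
      exact le_trans (Submodule.finrank_add_le_finrank_add_finrank _ _) (by omega)
  have h2 := H Finset.univ
  rwa [show (⨆ i ∈ Finset.univ, p i) = ⨆ i, p i by simp] at h2


/-- Dual family to a linearly independent family. -/
lemma exists_dual_family {W : Type*} [AddCommGroup W] [Module K W] {α : Type*}
    {y : α → W} (hy : LinearIndependent K y) [DecidableEq α] :
    ∃ g : α → (W →ₗ[K] K), ∀ a b, g a (y b) = if b = a then 1 else 0 := by
  obtain ⟨qc, hqc⟩ := (Submodule.span K (Set.range y)).exists_isCompl
  let B := Basis.span hy
  refine ⟨fun a => (B.coord a).comp (Submodule.linearProjOfIsCompl _ qc hqc), fun a b => ?_⟩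
  have h1 : (Submodule.linearProjOfIsCompl _ qc hqc) (y b) = B b := by
    have h2 := Submodule.linearProjOfIsCompl_apply_left hqc (B b)
    rwa [show ((B b : W)) = y b from congrArg Subtype.val (Basis.span_apply hy b)] at h2
  rw [LinearMap.comp_apply, h1, Basis.coord_apply, Basis.repr_self, Finsupp.single_apply]

lemma z_indep {U W : Type*} [AddCommGroup U] [Module K U] [AddCommGroup W] [Module K W]
    {n r s : ℕ} {e : Fin n → U} (he : LinearIndependent K e)
    {u : Fin r → U} (hu : ∀ m, u m ≠ 0)
    {y : Fin r × (Unit ⊕ Fin s) → W} (hy : LinearIndependent K y) :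
    LinearIndependent K (fun idx : (Fin r × Fin n) ⊕ (Fin r × Fin s) =>
      Sum.elim (fun ma : Fin r × Fin n => e ma.2 ⊗ₜ[K] y (ma.1, Sum.inl ()))
        (fun mt : Fin r × Fin s => u mt.1 ⊗ₜ[K] y (mt.1, Sum.inr mt.2)) idx) := by
  classical
  obtain ⟨g, hg⟩ := exists_dual_family hy
  -- the contraction maps
  let A : (W →ₗ[K] K) → (U ⊗[K] W →ₗ[K] U) := fun f =>
    (TensorProduct.rid K U).toLinearMap ∘ₗ LinearMap.lTensor U f
  have hA : ∀ f (x : U) (w : W), A f (x ⊗ₜ[K] w) = f w • x := by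
    intro f x w
    simp [A]
  rw [Fintype.linearIndependent_iff]
  intro c hc
  -- first, kill the `inr` coefficients
  have hinr : ∀ mt : Fin r × Fin s, c (Sum.inr mt) = 0 := by
    intro mt
    have h1 := congrArg (A (g (mt.1, Sum.inr mt.2))) hc
    rw [map_sum, map_zero] at h1
    have h2 : ∀ idx, A (g (mt.1, Sum.inr mt.2)) (c idx • Sum.elim
        (fun ma : Fin r × Fin n => e ma.2 ⊗ₜ[K] y (ma.1, Sum.inl ()))
        (fun mt' : Fin r × Fin s => u mt'.1 ⊗ₜ[K] y (mt'.1, Sum.inr mt'.2)) idx)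
        = if idx = Sum.inr mt then c idx • u mt.1 else 0 := by
      rintro (ma | mt')
      · rw [Sum.elim_inl, map_smul, hA, hg]
        simp
      · rw [Sum.elim_inr, map_smul, hA, hg]
        rcases eq_or_ne mt' mt with rfl | hne
        · simp
        · have : (mt'.1, (Sum.inr mt'.2 : Unit ⊕ Fin s)) ≠ (mt.1, Sum.inr mt.2) := by
            simp only [ne_eq, Prod.mk.injEq, Sum.inr.injEq, not_and]
            intro h1 h2
            exact hne (Prod.ext h1 h2)
          simp [this, hne]
    rw [Finset.sum_congr rfl (fun idx _ => h2 idx), Finset.sum_ite_eq' Finset.univ (Sum.inr mt)]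
       at h1
    simp only [Finset.mem_univ, if_true] at h1
    rcases smul_eq_zero.mp h1 with h | h
    · exact h
    · exact absurd h (hu mt.1)
  -- now the `inl` coefficients
  have hinl : ∀ ma : Fin r × Fin n, c (Sum.inl ma) = 0 := by
    intro ma
    have h1 := congrArg (A (g (ma.1, Sum.inl ()))) hc
    rw [map_sum, map_zero] at h1
    have h2 : ∀ idx, A (g (ma.1, Sum.inl ())) (c idx • Sum.elim
        (fun ma' : Fin r × Fin n => e ma'.2 ⊗ₜ[K] y (ma'.1, Sum.inl ()))
        (fun mt' : Fin r × Fin s => u mt'.1 ⊗ₜ[K] y (mt'.1, Sum.inr mt'.2)) idx)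
        = Sum.elim (fun ma' : Fin r × Fin n => if ma'.1 = ma.1 then c idx • e ma'.2 else 0)
            (fun _ => 0) idx := by
      rintro (ma' | mt')
      · rw [Sum.elim_inl, map_smul, hA, hg]
        rcases eq_or_ne ma'.1 ma.1 with h | hne
        · simp [h, Prod.ext_iff]
        · have : ((ma'.1, Sum.inl ()) : Fin r × (Unit ⊕ Fin s)) ≠ (ma.1, Sum.inl ()) := by
            simp [Prod.ext_iff, hne]
          simp [this, hne]
      · rw [Sum.elim_inr, map_smul, hA, hg]
        simp
    rw [Finset.sum_congr rfl (fun idx _ => h2 idx), Fintype.sum_sum_type] at h1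
    simp only [Sum.elim_inl, Sum.elim_inr, Finset.sum_const_zero, add_zero] at h1
    rw [Fintype.sum_prod_type] at h1
    have h3 : ∀ m : Fin r, (∑ a : Fin n, if m = ma.1 then c (Sum.inl (m, a)) • e a else 0)
        = if m = ma.1 then ∑ a : Fin n, c (Sum.inl (m, a)) • e a else 0 := by
      intro m
      split <;> simp
    rw [Finset.sum_congr rfl (fun m _ => h3 m), Finset.sum_ite_eq' Finset.univ ma.1] at h1
    simp only [Finset.mem_univ, if_true] at h1
    have h4 := Fintype.linearIndependent_iff.mp he _ h1
    exact h4 ma.2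
  rintro (ma | mt)
  · exact hinl ma
  · exact hinr mt

lemma exists_spanning_family {W : Type*} [AddCommGroup W] [Module K W] {s : ℕ}
    (T : Submodule K W) [FiniteDimensional K T] (hT : finrank K T = 1 + s)
    {q : W} (hq : q ∈ T) (hq0 : q ≠ 0) :
    ∃ c : Fin s → W, (∀ t, c t ∈ T) ∧
      T ≤ Submodule.span K (insert q (Set.range c)) := by
  have hq' : (⟨q, hq⟩ : T) ≠ 0 := by
    simpa [Submodule.mk_eq_zero] using hq0
  obtain ⟨C, hC⟩ := (K ∙ (⟨q, hq⟩ : T)).exists_isCompl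
  have h1 : finrank K ↥(K ∙ (⟨q, hq⟩ : T)) = 1 := finrank_span_singleton hq'
  have hsum := Submodule.finrank_sup_add_finrank_inf_eq (K ∙ (⟨q, hq⟩ : T)) C
  rw [hC.sup_eq_top, hC.inf_eq_bot, finrank_top, finrank_bot, h1, hT] at hsum
  have hCs : finrank K C = s := by omega
  let bC : Basis (Fin s) K C := (finBasis K C).reindex (finCongr hCs)
  refine ⟨fun t => ((bC t : T) : W), fun t => ((bC t : T)).2, ?_⟩
  intro x hx
  have hx' : (⟨x, hx⟩ : T) ∈ (K ∙ (⟨q, hq⟩ : T)) ⊔ C := by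
    rw [hC.sup_eq_top]; trivial
  have h2 := Submodule.mem_map_of_mem (f := T.subtype) hx'
  rw [Submodule.map_sup] at h2
  have h3 : Submodule.map T.subtype (K ∙ (⟨q, hq⟩ : T)) = K ∙ q := by
    rw [Submodule.map_span]
    simp
  have h4 : Submodule.map T.subtype C ≤ Submodule.span K (Set.range fun t => ((bC t : T) : W)) := by
    have hC3 : Submodule.map C.subtype ⊤ = C := Submodule.map_subtype_top C
    calc Submodule.map T.subtype C
        = Submodule.map T.subtype (Submodule.map C.subtype (Submodule.span K (Set.range bC))) := by
          rw [bC.span_eq, hC3]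
      _ = Submodule.span K (T.subtype '' (C.subtype '' Set.range bC)) := by
          rw [Submodule.map_span, Submodule.map_span]
      _ ≤ Submodule.span K (Set.range fun t => ((bC t : T) : W)) := by
          apply Submodule.span_mono
          rintro _ ⟨_, ⟨yc, ⟨t, rfl⟩, rfl⟩, rfl⟩
          exact ⟨t, rfl⟩
  rw [h3] at h2
  have h5 : (K ∙ q) ⊔ Submodule.map T.subtype C
      ≤ Submodule.span K (insert q (Set.range fun t => ((bC t : T) : W))) := by
    rw [Submodule.span_insert]
    exact sup_le_sup le_rfl h4
  exact h5 h2


section SegreT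

variable {ι : Type*} [Fintype ι] [DecidableEq ι] {V : ι → Type*} [∀ i, AddCommGroup (V i)]
    [∀ i, Module K (V i)]

lemma segreTangent_eq_iSup (v : ∀ i, V i) :
    segreTangent K V v
      = ⨆ j, LinearMap.range ((PiTensorProduct.tprod K (s := V)).toLinearMap v j) := by
  rw [segreTangent]
  have h : {t | ∃ (j : ι) (w : V j), t = PiTensorProduct.tprod K (Function.update v j w)}
      = ⋃ j, Set.range fun w : V j => PiTensorProduct.tprod K (Function.update v j w) := by
    ext t
    simp only [Set.mem_iUnion, Set.mem_range, Set.mem_setOf_eq, eq_comm]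
  rw [h, Submodule.span_iUnion]
  congr 1
  funext j
  rw [show (Set.range fun w : V j => PiTensorProduct.tprod K (Function.update v j w))
      = Set.range ⇑((PiTensorProduct.tprod K (s := V)).toLinearMap v j) from rfl,
    ← LinearMap.coe_range, Submodule.span_eq]

lemma segreTangent_fd [∀ i, FiniteDimensional K (V i)] (v : ∀ i, V i) :
    FiniteDimensional K (segreTangent K V v) := by
  rw [segreTangent_eq_iSup]
  infer_instance

lemma tprod_mem_segreTangent [Nonempty ι] (v : ∀ i, V i) :
    PiTensorProduct.tprod K v ∈ segreTangent K V v := by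
  apply Submodule.subset_span
  refine ⟨Classical.arbitrary ι, v _, ?_⟩
  rw [Function.update_eq_self]

lemma segreTangent_finrank_le [∀ i, FiniteDimensional K (V i)] (v : ∀ i, V i)
    (hv : ∀ j, v j ≠ 0) :
    finrank K (segreTangent K V v) ≤ 1 + ∑ j, (finrank K (V j) - 1) := by
  choose f hf using fun j => exists_dual_eq_one (K := K) (hv j)
  set L : ∀ j, V j →ₗ[K] ⨂[K] i, V i :=
    fun j => (PiTensorProduct.tprod K (s := V)).toLinearMap v j with hLdef
  have hL : ∀ j w, L j w = PiTensorProduct.tprod K (Function.update v j w) := fun j w => rfl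
  have hle : segreTangent K V v ≤ (K ∙ (PiTensorProduct.tprod K v))
      ⊔ ⨆ j, Submodule.map (L j) (LinearMap.ker (f j)) := by
    rw [segreTangent, Submodule.span_le]
    rintro t ⟨j, w, rfl⟩
    have hdecomp : PiTensorProduct.tprod K (Function.update v j w)
        = f j w • PiTensorProduct.tprod K v + L j (w - f j w • v j) := by
      rw [← hL j w, map_sub, map_smul, hL j (v j), Function.update_eq_self]
      abel
    rw [SetLike.mem_coe, hdecomp]
    apply Submodule.add_mem
    · exact Submodule.mem_sup_left (Submodule.smul_mem _ _ (Submodule.mem_span_singleton_self _))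
    · refine Submodule.mem_sup_right (Submodule.mem_iSup_of_mem j ?_)
      refine Submodule.mem_map_of_mem ?_
      simp [LinearMap.mem_ker, hf j]
  have hker : ∀ j, finrank K (LinearMap.ker (f j)) = finrank K (V j) - 1 := by
    intro j
    have hr : LinearMap.range (f j) = ⊤ := by
      rw [LinearMap.range_eq_top]
      intro c
      exact ⟨c • v j, by simp [hf j]⟩
    have h2 := LinearMap.finrank_range_add_finrank_ker (f j)
    rw [hr, finrank_top, finrank_self] at h2
    omega
  calc finrank K (segreTangent K V v)
      ≤ finrank K ↥((K ∙ (PiTensorProduct.tprod K v))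
        ⊔ ⨆ j, Submodule.map (L j) (LinearMap.ker (f j))) := Submodule.finrank_mono hle
    _ ≤ finrank K ↥(K ∙ (PiTensorProduct.tprod K v))
        + finrank K ↥(⨆ j, Submodule.map (L j) (LinearMap.ker (f j))) :=
      Submodule.finrank_add_le_finrank_add_finrank _ _
    _ ≤ 1 + ∑ j, (finrank K (V j) - 1) := by
      gcongr
      · exact finrank_span_le_card _ |>.trans (by simp)
      · refine (finrank_iSup_le_sum _).trans ?_
        apply Finset.sum_le_sum
        intro j _
        exact (Submodule.finrank_map_le _ _).trans (le_of_eq (hker j))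


end SegreT

section Split

variable {ι : Type*} [decEq : DecidableEq ι] {V : ι → Type*} [∀ i, AddCommGroup (V i)]
    [∀ i, Module K (V i)]

lemma restrict_update_ne (i : ι) (v : ∀ j, V j) {j : ι} (hj : j ≠ i) (w : V j) :
    (fun jj : {j : ι // j ≠ i} => Function.update v j w jj.1)
      = Function.update (fun jj : {j : ι // j ≠ i} => v jj.1) ⟨j, hj⟩ w := by
  funext jj
  rcases eq_or_ne jj (⟨j, hj⟩ : {j : ι // j ≠ i}) with rfl | hne
  · simp
  · have h1 : jj.1 ≠ j := fun h => hne (Subtype.ext h)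
    rw [Function.update_of_ne h1, Function.update_of_ne hne]

lemma restrict_update_self (i : ι) (v : ∀ j, V j) (w : V i) :
    (fun jj : {j : ι // j ≠ i} => Function.update v i w jj.1)
      = fun jj : {j : ι // j ≠ i} => v jj.1 := by
  funext jj
  exact Function.update_of_ne jj.2 w v

/-- The multilinear map splitting off the `i`-th factor. -/
noncomputable def splitMulti (i : ι) :
    MultilinearMap K V (V i ⊗[K] (⨂[K] j : {j : ι // j ≠ i}, V j.1)) where
  toFun v := v i ⊗ₜ[K] PiTensorProduct.tprod K (fun jj : {j : ι // j ≠ i} => v jj.1)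
  map_update_add' := by
    intro dec v j x y
    have hd : dec = decEq := Subsingleton.elim _ _
    subst hd
    beta_reduce
    rcases eq_or_ne j i with rfl | hj
    · rw [restrict_update_self, restrict_update_self, restrict_update_self]
      simp [TensorProduct.add_tmul]
    · rw [restrict_update_ne i v hj, restrict_update_ne i v hj, restrict_update_ne i v hj,
        Function.update_of_ne (Ne.symm hj), Function.update_of_ne (Ne.symm hj),
        Function.update_of_ne (Ne.symm hj), MultilinearMap.map_update_add,
        TensorProduct.tmul_add]
  map_update_smul' := by
    intro dec v j c x
    have hd : dec = decEq := Subsingleton.elim _ _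
    subst hd
    beta_reduce
    rcases eq_or_ne j i with rfl | hj
    · rw [restrict_update_self, restrict_update_self]
      simp [TensorProduct.smul_tmul']
    · rw [restrict_update_ne i v hj, restrict_update_ne i v hj,
        Function.update_of_ne (Ne.symm hj), Function.update_of_ne (Ne.symm hj),
        MultilinearMap.map_update_smul, TensorProduct.tmul_smul]

/-- The linear map splitting off the `i`-th tensor factor. -/
noncomputable def splitMap (i : ι) :
    (⨂[K] j, V j) →ₗ[K] V i ⊗[K] (⨂[K] j : {j : ι // j ≠ i}, V j.1) :=
  PiTensorProduct.lift (splitMulti i)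

@[simp] lemma splitMap_tprod (i : ι) (v : ∀ j, V j) :
    splitMap i (PiTensorProduct.tprod K v)
      = v i ⊗ₜ[K] PiTensorProduct.tprod K (fun jj : {j : ι // j ≠ i} => v jj.1) := by
  rw [splitMap, PiTensorProduct.lift.tprod]
  rfl


end Split

end Stmt5

set_option maxHeartbeats 1000000 in
set_option synthInstance.maxHeartbeats 100000 in
/-- fix an index `i`.  If nonzero simple tensors `p₁, ..., p_r` in
`V₁ ⊗ ... ⊗ V_k` project (by deleting the `i`-th tensor factor) to pairwise distinct
simple tensors `q₁, ..., q_r` whose affine tangent spaces to the Segre cone of the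
remaining factors are linearly independent (the sum has the maximal dimension
`r(1 + ∑_{j≠i}(dim V_j − 1))`), then the affine tangent spaces to the Segre cone at
`p₁, ..., p_r` are also linearly independent. -/
theorem stmt5 {K : Type*} [Field K] {k r : ℕ}
    (V : Fin k → Type*) [∀ j, AddCommGroup (V j)] [∀ j, Module K (V j)]
    [∀ j, FiniteDimensional K (V j)] (hdim : ∀ j, 2 ≤ finrank K (V j))
    (i : Fin k) (v : Fin r → ∀ j, V j) (hv : ∀ m j, v m j ≠ 0)
    (hdist : ∀ m m', m ≠ m' →
      PiTensorProduct.tprod K (fun j : {j : Fin k // j ≠ i} => v m j.1)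
        ≠ PiTensorProduct.tprod K (fun j : {j : Fin k // j ≠ i} => v m' j.1))
    (hindep : finrank K
        ↥(⨆ m, segreTangent K (fun j : {j : Fin k // j ≠ i} => V j.1)
            (fun j => v m j.1))
      = r * (1 + ∑ j : {j : Fin k // j ≠ i}, (finrank K (V j.1) - 1))) :
    finrank K ↥(⨆ m, segreTangent K V (v m))
      = r * (1 + ∑ j, (finrank K (V j) - 1)) := by
  classical
  rcases isEmpty_or_nonempty {j : Fin k // j ≠ i} with hS | hS
  · -- degenerate case: only one factor, forces `r = 0`
    haveI := hS
    have hbot : ∀ m : Fin r,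
        segreTangent K (fun j : {j : Fin k // j ≠ i} => V j.1) (fun j => v m j.1) = ⊥ := by
      intro m
      rw [segreTangent]
      convert Submodule.span_empty
      rw [Set.eq_empty_iff_forall_notMem]
      rintro t ⟨jj, -, -⟩
      exact (IsEmpty.false jj)
    have h0 : (⨆ m, segreTangent K (fun j : {j : Fin k // j ≠ i} => V j.1)
        (fun j => v m j.1)) = ⊥ := by
      rw [iSup_eq_bot]; exact hbot
    rw [h0, finrank_bot] at hindep
    have hr : r = 0 := by
      have h2 : (0:ℕ) = r * (1 + 0) := by simpa using hindep
      omega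
    subst hr
    rw [show (⨆ m : Fin 0, segreTangent K V (v m)) = ⊥ from iSup_of_empty _, finrank_bot]
    simp
  -- main case
  haveI : ∀ m : Fin r, FiniteDimensional K (segreTangent K V (v m)) :=
    fun m => Stmt5.segreTangent_fd (v m)
  haveI : ∀ j : {j : Fin k // j ≠ i}, FiniteDimensional K (V j.1) := fun j => inferInstance
  haveI : ∀ m : Fin r, FiniteDimensional K
      (segreTangent K (fun j : {j : Fin k // j ≠ i} => V j.1) (fun j => v m j.1)) :=
    fun m => Stmt5.segreTangent_fd _
  set S := {j : Fin k // j ≠ i} with hSdef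
  set W := ⨂[K] j : S, V j.1 with hWdef
  set T' : Fin r → Submodule K W :=
    fun m => segreTangent K (fun j : S => V j.1) (fun j => v m j.1) with hT'def
  set q : Fin r → W := fun m => PiTensorProduct.tprod K (fun j : S => v m j.1) with hqdef
  set n := finrank K (V i) with hndef
  set s := ∑ j : S, (finrank K (V j.1) - 1) with hsdef
  have hn : 2 ≤ n := hdim i
  have hq0 : ∀ m, q m ≠ 0 := fun m => Stmt5.tprod_ne_zero (fun j => hv m j.1)
  have hqT : ∀ m, q m ∈ T' m := fun m => Stmt5.tprod_mem_segreTangent _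
  -- forced dimensions
  have hT'le : ∀ m, finrank K (T' m) ≤ 1 + s :=
    fun m => Stmt5.segreTangent_finrank_le _ (fun j => hv m j.1)
  have hsum_le : ∑ m, finrank K (T' m) ≤ r * (1 + s) := by
    calc ∑ m, finrank K (T' m) ≤ ∑ _m : Fin r, (1 + s) :=
          Finset.sum_le_sum (fun m _ => hT'le m)
      _ = r * (1 + s) := by simp [Finset.sum_const, smul_eq_mul]
  have hsum_eq : ∑ m, finrank K (T' m) = r * (1 + s) := by
    have h1 : finrank K ↥(⨆ m, T' m) ≤ ∑ m, finrank K (T' m) :=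
      Stmt5.finrank_iSup_le_sum T'
    rw [hindep] at h1
    omega
  have hT'eq : ∀ m, finrank K (T' m) = 1 + s := by
    intro m
    by_contra hne
    have hlt : finrank K (T' m) < 1 + s := lt_of_le_of_ne (hT'le m) hne
    have h2 : ∑ m, finrank K (T' m) < ∑ _m : Fin r, (1 + s) :=
      Finset.sum_lt_sum (fun m' _ => hT'le m') ⟨m, Finset.mem_univ m, hlt⟩
    rw [hsum_eq] at h2
    simp [Finset.sum_const, smul_eq_mul] at h2
  -- spanning families for each tangent space downstairs
  choose c hcmem hcspan using fun m =>
    Stmt5.exists_spanning_family (T' m) (hT'eq m) (hqT m) (hq0 m)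
  -- the `y` family
  set y : Fin r × (Unit ⊕ Fin s) → W :=
    fun mz => Sum.elim (fun _ : Unit => q mz.1) (fun t => c mz.1 t) mz.2 with hydef
  have hyT : ∀ mz, y mz ∈ T' mz.1 := by
    rintro ⟨m, z | t⟩
    · exact hqT m
    · exact hcmem m t
  have hyindep : LinearIndependent K y := by
    rw [linearIndependent_iff_card_eq_finrank_span]
    have hspan_eq : Submodule.span K (Set.range y) = ⨆ m, T' m := by
      apply le_antisymm
      · rw [Submodule.span_le]
        rintro _ ⟨mz, rfl⟩
        exact Submodule.mem_iSup_of_mem mz.1 (hyT mz)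
      · apply iSup_le
        intro m
        refine le_trans (hcspan m) (Submodule.span_le.mpr ?_)
        rintro t (rfl | ⟨t', rfl⟩)
        · exact Submodule.subset_span ⟨(m, Sum.inl ()), rfl⟩
        · exact Submodule.subset_span ⟨(m, Sum.inr t'), rfl⟩
    rw [Set.finrank, hspan_eq, hindep]
    simp [mul_comm]
  -- the `z` family upstairs
  set e : Fin n → V i := ⇑(finBasis K (V i)) with hedef
  have hu : ∀ m, v m i ≠ 0 := fun m => hv m i
  have hz := Stmt5.z_indep (finBasis K (V i)).linearIndependent hu hyindep
  set Φ : (⨂[K] j, V j) →ₗ[K] V i ⊗[K] W := Stmt5.splitMap i with hPhidef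
  set P : Submodule K (V i ⊗[K] W) := Submodule.map Φ (⨆ m, segreTangent K V (v m)) with hPdef
  haveI hfd1 : FiniteDimensional K ↥(⨆ m, segreTangent K V (v m)) :=
    Submodule.finiteDimensional_iSup _
  haveI : FiniteDimensional K P := Module.Finite.map _ _
  -- membership of the z family in P
  have hz_inl : ∀ (m : Fin r) (a : Fin n), e a ⊗ₜ[K] q m ∈ P := by
    intro m a
    have h1 : PiTensorProduct.tprod K (Function.update (v m) i (e a))
        ∈ segreTangent K V (v m) := Submodule.subset_span ⟨i, e a, rfl⟩
    have h2 : Φ (PiTensorProduct.tprod K (Function.update (v m) i (e a)))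
        = e a ⊗ₜ[K] q m := by
      rw [hPhidef, Stmt5.splitMap_tprod, Function.update_self,
        Stmt5.restrict_update_self]
    rw [← h2]
    exact Submodule.mem_map_of_mem (Submodule.mem_iSup_of_mem m h1)
  have hz_inr : ∀ (m : Fin r) (w' : W), w' ∈ T' m → v m i ⊗ₜ[K] w' ∈ P := by
    intro m w' hw'
    have h6 : Submodule.map (TensorProduct.mk K (V i) W (v m i)) (T' m) ≤ P := by
      rw [hT'def]
      show Submodule.map _ (segreTangent K (fun j : S => V j.1) (fun j => v m j.1)) ≤ P
      rw [segreTangent, Submodule.map_span, Submodule.span_le]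
      rintro _ ⟨t, ⟨jj, w, rfl⟩, rfl⟩
      have h7 : Φ (PiTensorProduct.tprod K (Function.update (v m) jj.1 w))
          = v m i ⊗ₜ[K] (PiTensorProduct.tprod K
              (Function.update (fun j : S => v m j.1) jj w)) := by
        rw [hPhidef, Stmt5.splitMap_tprod, Function.update_of_ne (Ne.symm jj.2),
          Stmt5.restrict_update_ne i (v m) jj.2 w]
      have h8 : PiTensorProduct.tprod K (Function.update (v m) jj.1 w)
          ∈ segreTangent K V (v m) := Submodule.subset_span ⟨jj.1, w, rfl⟩
      rw [TensorProduct.mk_apply, ← h7]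
      exact Submodule.mem_map_of_mem (Submodule.mem_iSup_of_mem m h8)
    exact h6 (Submodule.mem_map_of_mem hw')
  set zfun : (Fin r × Fin n) ⊕ (Fin r × Fin s) → V i ⊗[K] W := fun idx =>
    Sum.elim (fun ma : Fin r × Fin n => e ma.2 ⊗ₜ[K] y (ma.1, Sum.inl ()))
      (fun mt : Fin r × Fin s => v mt.1 i ⊗ₜ[K] y (mt.1, Sum.inr mt.2)) idx with hzfun
  have hzmem : ∀ idx, zfun idx ∈ P := by
    rintro (⟨m, a⟩ | ⟨m, t⟩)
    · exact hz_inl m a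
    · exact hz_inr m _ (hcmem m t)
  -- lower bound
  have hlow : r * (n + s) ≤ finrank K ↥(⨆ m, segreTangent K V (v m)) := by
    have hsple : Submodule.span K (Set.range zfun) ≤ P := by
      rw [Submodule.span_le]
      rintro _ ⟨idx, rfl⟩
      exact hzmem idx
    have hcard : finrank K ↥(Submodule.span K (Set.range zfun))
        = Fintype.card ((Fin r × Fin n) ⊕ (Fin r × Fin s)) := finrank_span_eq_card hz
    have hcard2 : Fintype.card ((Fin r × Fin n) ⊕ (Fin r × Fin s)) = r * (n + s) := by
      simp [mul_add]
    have hmono : finrank K ↥(Submodule.span K (Set.range zfun)) ≤ finrank K P :=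
      Submodule.finrank_mono hsple
    rw [hcard, hcard2] at hmono
    exact le_trans hmono (Submodule.finrank_map_le _ _)
  -- upper bound
  have hub : finrank K ↥(⨆ m, segreTangent K V (v m))
      ≤ r * (1 + ∑ j, (finrank K (V j) - 1)) := by
    calc finrank K ↥(⨆ m, segreTangent K V (v m))
        ≤ ∑ m, finrank K (segreTangent K V (v m)) :=
          Stmt5.finrank_iSup_le_sum _
      _ ≤ ∑ _m : Fin r, (1 + ∑ j, (finrank K (V j) - 1)) :=
          Finset.sum_le_sum (fun m _ => Stmt5.segreTangent_finrank_le _ (hv m))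
      _ = r * (1 + ∑ j, (finrank K (V j) - 1)) := by
          simp [Finset.sum_const, smul_eq_mul]
  -- arithmetic
  have harith : 1 + ∑ j, (finrank K (V j) - 1) = n + s := by
    have h1 : ∑ j, (finrank K (V j) - 1)
        = (finrank K (V i) - 1) + ∑ j ∈ ({i}ᶜ : Finset (Fin k)), (finrank K (V j) - 1) :=
      Fintype.sum_eq_add_sum_compl i _
    have h2 : ∑ j ∈ ({i}ᶜ : Finset (Fin k)), (finrank K (V j) - 1)
        = ∑ j : S, (finrank K (V j.1) - 1) := by
      rw [← Finset.sum_subtype ({i}ᶜ : Finset (Fin k))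
        (fun j => by simp [hSdef]) (fun j => finrank K (V j) - 1)]
    rw [h1, h2, ← hsdef, ← hndef]
    omega
  rw [harith] at hub ⊢
  omega
end

section
/- Let V_1, V_2, V_3 each be 2-dimensional vector spaces over an algebraically closed field of characteristic 0, and let a = a_1 ⊗ a_2 ⊗ a_3 and c = c_1 ⊗ c_2 ⊗ c_3 be simple tensors with {a_i, c_i} linearly independent in V_i for each i = 1, 2, 3. Then the sum of the affine tangent spaces to the Segre cone at a and at c equals the whole 8-dimensional space V_1 ⊗ V_2 ⊗ V_3. -/
open scoped TensorProduct
open Module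

/-- The affine tangent space to the Segre cone in `V₁ ⊗ V₂ ⊗ V₃` at the simple tensor
`a ⊗ b ⊗ c`, namely `V₁ ⊗ b ⊗ c + a ⊗ V₂ ⊗ c + a ⊗ b ⊗ V₃`. -/
noncomputable def segreTangent3 (K : Type*) [Field K] {V1 V2 V3 : Type*}
    [AddCommGroup V1] [Module K V1] [AddCommGroup V2] [Module K V2]
    [AddCommGroup V3] [Module K V3]
    (a : V1) (b : V2) (c : V3) : Submodule K (V1 ⊗[K] (V2 ⊗[K] V3)) :=
  Submodule.span K {x | ∃ w : V1, x = w ⊗ₜ[K] (b ⊗ₜ[K] c)}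
    ⊔ Submodule.span K {x | ∃ w : V2, x = a ⊗ₜ[K] (w ⊗ₜ[K] c)}
    ⊔ Submodule.span K {x | ∃ w : V3, x = a ⊗ₜ[K] (b ⊗ₜ[K] w)}

lemma mem1 {K : Type*} [Field K] {V1 V2 V3 : Type*}
    [AddCommGroup V1] [Module K V1] [AddCommGroup V2] [Module K V2]
    [AddCommGroup V3] [Module K V3]
    (a w : V1) (b : V2) (c : V3) :
    w ⊗ₜ[K] (b ⊗ₜ[K] c) ∈ segreTangent3 K a b c :=
  by
  apply Submodule.mem_sup_left
  exact Submodule.mem_sup_left (Submodule.subset_span ⟨w, rfl⟩)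

lemma mem2 {K : Type*} [Field K] {V1 V2 V3 : Type*}
    [AddCommGroup V1] [Module K V1] [AddCommGroup V2] [Module K V2]
    [AddCommGroup V3] [Module K V3]
    (a : V1) (b w : V2) (c : V3) :
    a ⊗ₜ[K] (w ⊗ₜ[K] c) ∈ segreTangent3 K a b c :=
  by
  apply Submodule.mem_sup_left
  exact Submodule.mem_sup_right (Submodule.subset_span ⟨w, rfl⟩)

lemma mem3 {K : Type*} [Field K] {V1 V2 V3 : Type*}
    [AddCommGroup V1] [Module K V1] [AddCommGroup V2] [Module K V2]
    [AddCommGroup V3] [Module K V3]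
    (a : V1) (b : V2) (c w : V3) :
    a ⊗ₜ[K] (b ⊗ₜ[K] w) ∈ segreTangent3 K a b c :=
  Submodule.mem_sup_right (Submodule.subset_span ⟨w, rfl⟩)

set_option maxHeartbeats 1000000 in
/-- for `V₁, V₂, V₃` each of dimension `2` over an algebraically closed
field of characteristic `0`, and simple tensors `a = a₁⊗a₂⊗a₃`, `c = c₁⊗c₂⊗c₃` with
`{aᵢ, cᵢ}` linearly independent for each `i`, the sum of the affine tangent spaces to
the Segre cone at `a` and `c` is the whole 8-dimensional space `V₁ ⊗ V₂ ⊗ V₃`. -/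
theorem stmt7 {K V1 V2 V3 : Type*} [Field K] [IsAlgClosed K] [CharZero K]
    [AddCommGroup V1] [Module K V1] [FiniteDimensional K V1]
    [AddCommGroup V2] [Module K V2] [FiniteDimensional K V2]
    [AddCommGroup V3] [Module K V3] [FiniteDimensional K V3]
    (h1 : finrank K V1 = 2) (h2 : finrank K V2 = 2) (h3 : finrank K V3 = 2)
    (a1 c1 : V1) (a2 c2 : V2) (a3 c3 : V3)
    (hi1 : LinearIndependent K ![a1, c1]) (hi2 : LinearIndependent K ![a2, c2])
    (hi3 : LinearIndependent K ![a3, c3]) :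
    segreTangent3 K a1 a2 a3 ⊔ segreTangent3 K c1 c2 c3 = ⊤ := by
  obtain ⟨b1, e1⟩ : ∃ b : Basis (Fin 2) K V1, ⇑b = ![a1, c1] :=
    ⟨basisOfLinearIndependentOfCardEqFinrank hi1 (by rw [Fintype.card_fin, h1]),
      coe_basisOfLinearIndependentOfCardEqFinrank _ _⟩
  obtain ⟨b2, e2⟩ : ∃ b : Basis (Fin 2) K V2, ⇑b = ![a2, c2] :=
    ⟨basisOfLinearIndependentOfCardEqFinrank hi2 (by rw [Fintype.card_fin, h2]),
      coe_basisOfLinearIndependentOfCardEqFinrank _ _⟩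
  obtain ⟨b3, e3⟩ : ∃ b : Basis (Fin 2) K V3, ⇑b = ![a3, c3] :=
    ⟨basisOfLinearIndependentOfCardEqFinrank hi3 (by rw [Fintype.card_fin, h3]),
      coe_basisOfLinearIndependentOfCardEqFinrank _ _⟩
  set B := (b1.tensorProduct (b2.tensorProduct b3)) with hBdef
  rw [← top_le_iff, ← B.span_eq, Submodule.span_le]
  rintro x ⟨⟨i, j, k⟩, rfl⟩
  have hB : B (i, j, k) = b1 i ⊗ₜ[K] (b2 j ⊗ₜ[K] b3 k) := by
    simp [B, Basis.tensorProduct_apply]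
  rw [SetLike.mem_coe, hB, e1, e2, e3]
  fin_cases i <;> fin_cases j <;> fin_cases k <;> simp only [Matrix.cons_val_zero, Matrix.cons_val_one, Matrix.head_cons]
  · exact Submodule.mem_sup_left (mem1 a1 a1 a2 a3)
  · exact Submodule.mem_sup_left (mem3 a1 a2 a3 c3)
  · exact Submodule.mem_sup_left (mem2 a1 a2 c2 a3)
  · exact Submodule.mem_sup_right (mem1 c1 a1 c2 c3)
  · exact Submodule.mem_sup_left (mem1 a1 c1 a2 a3)
  · exact Submodule.mem_sup_right (mem2 c1 c2 a2 c3)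
  · exact Submodule.mem_sup_right (mem3 c1 c2 c3 a3)
  · exact Submodule.mem_sup_right (mem1 c1 c1 c2 c3)
end

section
/- Let Y be a multiprojective space of dimension n with at least two factors (so Y ≇ P^n), and let u, v be two distinct points of Y. Then h^1(I_{2{u,v}}(1,...,1)) ≤ n; equivalently, the affine tangent spaces to the cone over the Segre variety at u and v never coincide. -/
open scoped TensorProduct
open Module

section Aux

variable {K : Type*} [Field K] {k : ℕ} (V : Fin k → Type*)
  [∀ i, AddCommGroup (V i)] [∀ i, Module K (V i)]

/-- The product of linear functionals, as a functional on the tensor product. -/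
noncomputable def tensorDual (f : ∀ i, V i →ₗ[K] K) : (⨂[K] i, V i) →ₗ[K] K :=
  PiTensorProduct.lift ((MultilinearMap.mkPiAlgebra K (Fin k) K).compLinearMap f)

@[simp] lemma tensorDual_tprod (f : ∀ i, V i →ₗ[K] K) (m : ∀ i, V i) :
    tensorDual V f (PiTensorProduct.tprod K m) = ∏ i, f i (m i) := by
  simp [tensorDual]

lemma linearIndependent_of_dual {M Z : Type*} [DecidableEq Z] [AddCommGroup M] [Module K M]
    (t : Z → M) (G : Z → (M →ₗ[K] K))
    (h : ∀ z z', G z (t z') = if z' = z then 1 else 0) : LinearIndependent K t := by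
  rw [linearIndependent_iff']
  intro s g hsum z hz
  have h2 := congrArg (G z) hsum
  rw [map_sum, map_zero] at h2
  simp only [map_smul, h, smul_eq_mul, mul_ite, mul_one, mul_zero] at h2
  rwa [Finset.sum_ite_eq' s z g, if_pos hz] at h2

lemma linearIndependent_tprod_basis {η : Fin k → Type*}
    (B : ∀ i, Basis (η i) K (V i)) {Z : Type*} (p : Z → ∀ i, η i)
    (hp : Function.Injective p) :
    LinearIndependent K (fun z => PiTensorProduct.tprod K (fun i => B i (p z i))) := by
  classical
  refine linearIndependent_of_dual _
    (fun z => tensorDual V (fun i => (B i).coord (p z i))) ?_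
  intro z z'
  rw [tensorDual_tprod]
  have hco : ∀ i, (B i).coord (p z i) (B i (p z' i)) = if p z' i = p z i then 1 else 0 := by
    intro i
    rw [Basis.coord_apply, Basis.repr_self, Finsupp.single_apply]
  simp only [hco]
  rcases eq_or_ne z' z with rfl | hzz
  · simp
  · rw [if_neg hzz]
    have hex : ∃ i, p z' i ≠ p z i := by
      by_contra hc
      push_neg at hc
      exact hzz (hp (funext hc))
    obtain ⟨i, hi⟩ := hex
    exact Finset.prod_eq_zero (Finset.mem_univ i) (if_neg hi)

lemma update_family_injective {ι : Type*} [DecidableEq ι] {η : ι → Type*} (e : ∀ i, η i) :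
    Function.Injective (fun z : Option ((i : ι) × {x : η i // x ≠ e i}) =>
      z.elim e (fun y => Function.update e y.1 y.2.1)) := by
  rintro (_ | ⟨i, x⟩) (_ | ⟨j, y⟩) h
  · rfl
  · exfalso
    have h1 := congrFun h j
    simp only [Option.elim, Function.update_self] at h1
    exact y.2 h1.symm
  · exfalso
    have h1 := congrFun h i
    simp only [Option.elim, Function.update_self] at h1
    exact x.2 h1
  · simp only [Option.elim] at h
    rcases eq_or_ne i j with rfl | hij
    · have h1 := congrFun h i
      simp only [Function.update_self] at h1
      rw [Subtype.ext h1]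
    · exfalso
      have h1 := congrFun h i
      rw [Function.update_self, Function.update_of_ne hij] at h1
      exact x.2 h1

end Aux

/-- let `Y` be a multiprojective space of dimension
`n = ∑ (dim V i − 1)` with at least two factors (so `Y ≇ P^n`), and `u ≠ v` two
distinct points of `Y` (nonzero simple tensors, non-proportional in some factor).
Then `h^1(I_{2{u,v}}(1,...,1)) = 2(n+1) − dim (T_u + T_v) ≤ n`; equivalently the
affine tangent spaces to the cone over the Segre variety at `u` and `v` never
coincide. -/
theorem stmt10 {K : Type*} [Field K] [IsAlgClosed K] [CharZero K] {k : ℕ}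
    (hk : 2 ≤ k)
    (V : Fin k → Type*) [∀ i, AddCommGroup (V i)] [∀ i, Module K (V i)]
    [∀ i, FiniteDimensional K (V i)] (hdim : ∀ i, 2 ≤ finrank K (V i))
    (u v : ∀ i, V i) (hu : ∀ i, u i ≠ 0) (hv : ∀ i, v i ≠ 0)
    (hne : ∃ i, LinearIndependent K ![u i, v i]) :
    2 * ((∑ i, (finrank K (V i) - 1)) + 1)
        - finrank K ↥(segreTangent K V u ⊔ segreTangent K V v)
      ≤ ∑ i, (finrank K (V i) - 1)
      ∧ segreTangent K V u ≠ segreTangent K V v := by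
  classical
  obtain ⟨i0, hi0⟩ := hne
  -- finite dimensionality of the tangent spaces
  have hfd : ∀ w : ∀ i, V i, FiniteDimensional K ↥(segreTangent K V w) := by
    intro w
    have hle : segreTangent K V w ≤
        ⨆ i, LinearMap.range ((PiTensorProduct.tprod K (s := V)).toLinearMap w i) := by
      refine Submodule.span_le.2 ?_
      rintro t ⟨i, x, rfl⟩
      exact Submodule.mem_iSup_of_mem i ⟨x, rfl⟩
    exact Submodule.finiteDimensional_of_le hle
  haveI := hfd u
  haveI := hfd v
  -- a second index
  haveI : Nontrivial (Fin k) :=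
    ⟨⟨⟨0, by omega⟩, ⟨1, by omega⟩, by simp [Fin.ext_iff]⟩⟩
  obtain ⟨j0, hj0⟩ := exists_ne i0
  ------------------------------------------------------------------
  -- Step A : finrank (segreTangent u) ≥ n + 1
  ------------------------------------------------------------------
  have hsing : ∀ i : Fin k, LinearIndependent K ((↑) : ({u i} : Set (V i)) → V i) :=
    fun i => LinearIndepOn.singleton (v := id) (hu i)
  let η : Fin k → Type _ := fun i => ↥(LinearIndepOn.extend (v := id) (hsing i) (Set.subset_univ _))
  let B : ∀ i, Basis (η i) K (V i) := fun i => Basis.extend (hsing i)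
  haveI : ∀ i, Fintype (η i) := fun i => FiniteDimensional.fintypeBasisIndex (B i)
  let e : ∀ i, η i := fun i => ⟨u i, LinearIndepOn.subset_extend (v := id) (hsing i) _ rfl⟩
  have hBe : ∀ i, B i (e i) = u i := fun i => Module.Basis.extend_apply_self (hsing i) (e i)
  let Z := Option ((i : Fin k) × {x : η i // x ≠ e i})
  let p : Z → ∀ i, η i := fun z => z.elim e (fun y => Function.update e y.1 y.2.1)
  have hp : Function.Injective p := update_family_injective e
  let t : Z → ⨂[K] i, V i := fun z => PiTensorProduct.tprod K (fun i => B i (p z i))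
  have ht : LinearIndependent K t := linearIndependent_tprod_basis V B p hp
  have htmem : ∀ z, t z ∈ segreTangent K V u := by
    rintro (_ | ⟨i, x⟩)
    · have h1 : (fun i => B i (p none i)) = u := funext fun i => hBe i
      refine Submodule.subset_span ⟨i0, u i0, ?_⟩
      show PiTensorProduct.tprod K (fun i => B i (p none i)) = _
      rw [h1, Function.update_eq_self]
    · refine Submodule.subset_span ⟨i, B i x.1, ?_⟩
      show PiTensorProduct.tprod K (fun j => B j (Function.update e i x.1 j)) = _
      congr 1
      funext j
      rcases eq_or_ne j i with rfl | hj
      · rw [Function.update_self, Function.update_self]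
      · rw [Function.update_of_ne hj, Function.update_of_ne hj, hBe]
  have hcardi : ∀ i, Fintype.card {x : η i // x ≠ e i} = finrank K (V i) - 1 := by
    intro i
    have h1 : Fintype.card {x : η i // ¬ x = e i}
        = Fintype.card (η i) - Fintype.card {x : η i // x = e i} :=
      Fintype.card_subtype_compl _
    rw [Fintype.card_subtype_eq (e i)] at h1
    rw [← finrank_eq_card_basis (B i)] at h1
    exact h1
  have hcard : Fintype.card Z = (∑ i, (finrank K (V i) - 1)) + 1 := by
    rw [show Fintype.card Z
        = Fintype.card ((i : Fin k) × {x : η i // x ≠ e i}) + 1 from Fintype.card_option,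
      Fintype.card_sigma]
    congr 1
    exact Finset.sum_congr rfl fun i _ => hcardi i
  have hA : (∑ i, (finrank K (V i) - 1)) + 1 ≤ finrank K ↥(segreTangent K V u) := by
    have h1 : finrank K ↥(Submodule.span K (Set.range t)) = Fintype.card Z :=
      finrank_span_eq_card ht
    have h2 : Submodule.span K (Set.range t) ≤ segreTangent K V u :=
      Submodule.span_le.2 (Set.range_subset_iff.2 htmem)
    rw [← hcard, ← h1]
    exact Submodule.finrank_mono h2
  ------------------------------------------------------------------
  -- Step B : a vector in T_v not in T_u
  ------------------------------------------------------------------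
  have hvspan : v i0 ∉ Submodule.span K {u i0} := by
    intro hmem
    rw [Submodule.mem_span_singleton] at hmem
    obtain ⟨c, hc⟩ := hmem
    have h2 := linearIndependent_fin2.mp hi0
    simp only [Matrix.cons_val_one, Matrix.head_cons, Matrix.cons_val_zero] at h2
    obtain ⟨hv1, hv2⟩ := h2
    have hc0 : c ≠ 0 := by
      rintro rfl
      rw [zero_smul] at hc
      exact hv i0 hc.symm
    exact hv2 c⁻¹ (by rw [← hc, smul_smul, inv_mul_cancel₀ hc0, one_smul])
  obtain ⟨g1, hg1v, hg1map⟩ :=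
    Submodule.exists_dual_map_eq_bot_of_notMem hvspan inferInstance
  have hg1u : g1 (u i0) = 0 := by
    have h1 : g1 (u i0) ∈ Submodule.map g1 (Submodule.span K {u i0}) :=
      Submodule.mem_map_of_mem (Submodule.mem_span_singleton_self _)
    rw [hg1map, Submodule.mem_bot] at h1
    exact h1
  have hx0ex : ∃ x : V j0, x ∉ Submodule.span K {u j0} := by
    by_contra hcon
    push_neg at hcon
    have htop : Submodule.span K {u j0} = ⊤ := eq_top_iff.2 fun y _ => hcon y
    have h1 := finrank_span_singleton (K := K) (hu j0)
    rw [htop, finrank_top K (V j0)] at h1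
    have := hdim j0
    omega
  obtain ⟨x0, hx0⟩ := hx0ex
  obtain ⟨g2, hg2x, hg2map⟩ :=
    Submodule.exists_dual_map_eq_bot_of_notMem hx0 inferInstance
  have hg2u : g2 (u j0) = 0 := by
    have h1 : g2 (u j0) ∈ Submodule.map g2 (Submodule.span K {u j0}) :=
      Submodule.mem_map_of_mem (Submodule.mem_span_singleton_self _)
    rw [hg2map, Submodule.mem_bot] at h1
    exact h1
  have hf0ex : ∀ l, ∃ φ : Module.Dual K (V l), φ (v l) ≠ 0 := by
    intro l
    by_contra hcon
    push_neg at hcon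
    exact hv l ((Module.forall_dual_apply_eq_zero_iff K (v l)).mp hcon)
  choose f0 hf0 using hf0ex
  let f : ∀ l, V l →ₗ[K] K := Function.update (Function.update f0 i0 g1) j0 g2
  have hfj0 : f j0 = g2 := Function.update_self _ _ _
  have hfi0 : f i0 = g1 := by
    rw [show f i0 = Function.update f0 i0 g1 i0 from Function.update_of_ne (Ne.symm hj0) _ _,
      Function.update_self]
  have hfl : ∀ l, l ≠ i0 → l ≠ j0 → f l = f0 l := fun l h1 h2 => by
    rw [show f l = Function.update f0 i0 g1 l from Function.update_of_ne h2 _ _,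
      Function.update_of_ne h1]
  have hGu : segreTangent K V u ≤ LinearMap.ker (tensorDual V f) := by
    refine Submodule.span_le.2 ?_
    rintro s ⟨i, w, rfl⟩
    rw [SetLike.mem_coe, LinearMap.mem_ker, tensorDual_tprod]
    rcases ne_or_eq i i0 with h | rfl
    · refine Finset.prod_eq_zero (Finset.mem_univ i0) ?_
      rw [Function.update_of_ne (Ne.symm h), hfi0, hg1u]
    · refine Finset.prod_eq_zero (Finset.mem_univ j0) ?_
      rw [Function.update_of_ne hj0, hfj0, hg2u]
  have ht0v : PiTensorProduct.tprod K (Function.update v j0 x0) ∈ segreTangent K V v :=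
    Submodule.subset_span ⟨j0, x0, rfl⟩
  have hGt0 : tensorDual V f (PiTensorProduct.tprod K (Function.update v j0 x0)) ≠ 0 := by
    rw [tensorDual_tprod]
    refine Finset.prod_ne_zero_iff.2 fun l _ => ?_
    rcases eq_or_ne l j0 with rfl | hlj
    · rw [Function.update_self, hfj0]; exact hg2x
    · rw [Function.update_of_ne hlj]
      rcases eq_or_ne l i0 with rfl | hli
      · rw [hfi0]; exact hg1v
      · rw [hfl l hli hlj]; exact hf0 l
  have ht0u : PiTensorProduct.tprod K (Function.update v j0 x0) ∉ segreTangent K V u :=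
    fun h => hGt0 (hGu h)
  ------------------------------------------------------------------
  -- conclusion
  ------------------------------------------------------------------
  have hlt : segreTangent K V u < segreTangent K V u ⊔ segreTangent K V v := by
    refine lt_of_le_of_ne le_sup_left fun h => ht0u ?_
    rw [h]
    exact (le_sup_right : segreTangent K V v ≤ _) ht0v
  have hC : finrank K ↥(segreTangent K V u)
      < finrank K ↥(segreTangent K V u ⊔ segreTangent K V v) :=
    Submodule.finrank_lt_finrank_of_lt hlt
  constructor
  · omega
  · intro h
    exact ht0u (by rw [h]; exact ht0v)
end

section
/- Let V_1, ..., V_k be 2-dimensional vector spaces (k ≥ 2) over an algebraically closed field, and let p = v_1 ⊗ ... ⊗ v_k, q = w_1 ⊗ ... ⊗ w_k be nonzero simple tensors such that the affine tangent spaces to the Segre cone at p and at q are equal. Then p and q are proportional. -/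
open scoped TensorProduct
open Module

/-- A 2-dimensional space has a basis starting with any prescribed nonzero vector. -/
lemma exists_basis_head {K V : Type*} [Field K] [AddCommGroup V] [Module K V]
    [FiniteDimensional K V] (hd : finrank K V = 2) {x : V} (hx : x ≠ 0) :
    ∃ b : Basis (Fin 2) K V, b 0 = x := by
  have hlt : Submodule.span K {x} < ⊤ := by
    rw [lt_top_iff_ne_top]
    intro htop
    have := finrank_span_singleton (K := K) hx
    rw [htop, finrank_top] at this
    omega
  obtain ⟨u, -, hu⟩ := SetLike.exists_of_lt hlt
  have hli : LinearIndependent K ![x, u] := by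
    rw [LinearIndependent.pair_iff]
    intro s t hst
    by_cases ht : t = 0
    · subst ht
      rw [zero_smul, add_zero, smul_eq_zero] at hst
      exact ⟨hst.resolve_right hx, rfl⟩
    · exfalso
      apply hu
      have h1 : t • u = (-s) • x := by
        linear_combination (norm := module) hst
      have h2 : u = (t⁻¹ * (-s)) • x := by
        rw [mul_smul, ← h1, inv_smul_smul₀ ht]
      rw [h2]
      exact Submodule.smul_mem _ _ (Submodule.mem_span_singleton_self x)
  refine ⟨basisOfLinearIndependentOfCardEqFinrank hli (by simp [hd]), ?_⟩
  rw [coe_basisOfLinearIndependentOfCardEqFinrank]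
  rfl

/-- The coordinate functional on the tensor product attached to a choice of basis vector in
each factor. -/
noncomputable def tcoord {K : Type*} [Field K] {k : ℕ}
    (V : Fin k → Type*) [∀ i, AddCommGroup (V i)] [∀ i, Module K (V i)]
    (b : ∀ i, Basis (Fin 2) K (V i)) (f : Fin k → Fin 2) :
    (⨂[K] i, V i) →ₗ[K] K :=
  PiTensorProduct.lift
    ((MultilinearMap.mkPiAlgebra K (Fin k) K).compLinearMap fun i => (b i).coord (f i))

lemma tcoord_tprod {K : Type*} [Field K] {k : ℕ}
    (V : Fin k → Type*) [∀ i, AddCommGroup (V i)] [∀ i, Module K (V i)]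
    (b : ∀ i, Basis (Fin 2) K (V i)) (f : Fin k → Fin 2) (m : ∀ i, V i) :
    tcoord V b f (PiTensorProduct.tprod K m) = ∏ i, (b i).repr (m i) (f i) := by
  simp [tcoord, Basis.coord_apply]

/-- If `f` takes the value `1` at two distinct indices, the coordinate functional
`tcoord V b f` vanishes on the tangent space at `v`, where `b i 0 = v i`. -/
lemma tcoord_vanish {K : Type*} [Field K] {k : ℕ}
    (V : Fin k → Type*) [∀ i, AddCommGroup (V i)] [∀ i, Module K (V i)]
    (b : ∀ i, Basis (Fin 2) K (V i)) (v : ∀ i, V i) (hb : ∀ i, b i 0 = v i)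
    (f : Fin k → Fin 2) {j1 j2 : Fin k} (hne : j1 ≠ j2) (h1 : f j1 = 1) (h2 : f j2 = 1)
    {x : ⨂[K] i, V i} (hx : x ∈ segreTangent K V v) :
    tcoord V b f x = 0 := by
  have hle : segreTangent K V v ≤ LinearMap.ker (tcoord V b f) := by
    rw [segreTangent, Submodule.span_le]
    rintro _ ⟨i, u, rfl⟩
    simp only [SetLike.mem_coe, LinearMap.mem_ker, tcoord_tprod]
    obtain ⟨j, hji, hfj⟩ : ∃ j, j ≠ i ∧ f j = 1 := by
      rcases eq_or_ne j1 i with rfl | hj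
      · exact ⟨j2, fun hc => hne (hc ▸ rfl), h2⟩
      · exact ⟨j1, hj, h1⟩
    refine Finset.prod_eq_zero (Finset.mem_univ j) ?_
    rw [Function.update_of_ne hji, hfj, ← hb j, (b j).repr_self,
      Finsupp.single_eq_of_ne' (by decide : (0 : Fin 2) ≠ 1)]
  exact hle hx

/-- for `k ≥ 2` two-dimensional vector spaces over an algebraically
closed field and nonzero simple tensors `p = v₁⊗...⊗v_k`, `q = w₁⊗...⊗w_k`, if the
affine tangent spaces to the Segre cone at `p` and `q` are equal, then `p` and `q`
are proportional. -/
theorem stmt11 {K : Type*} [Field K] [IsAlgClosed K] {k : ℕ} (hk : 2 ≤ k)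
    (V : Fin k → Type*) [∀ i, AddCommGroup (V i)] [∀ i, Module K (V i)]
    [∀ i, FiniteDimensional K (V i)] (hdim : ∀ i, finrank K (V i) = 2)
    (v w : ∀ i, V i) (hv : ∀ i, v i ≠ 0) (hw : ∀ i, w i ≠ 0)
    (h : segreTangent K V v = segreTangent K V w) :
    ∃ c : K, PiTensorProduct.tprod K w = c • PiTensorProduct.tprod K v := by
  classical
  choose b hb using fun i => exists_basis_head (hdim i) (hv i)
  -- Step 1: the second coordinate of every `w m` (w.r.t. the basis starting at `v m`) is zero.
  have hc : ∀ m, (b m).repr (w m) 1 = 0 := by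
    intro j
    by_contra hj
    have : Nontrivial (Fin k) := Fin.nontrivial_iff_two_le.mpr hk
    obtain ⟨i, hij⟩ := exists_ne j
    set f : Fin k → Fin 2 :=
      fun m => if m = i then 1 else if (b m).repr (w m) 1 ≠ 0 then 1 else 0 with hf
    have hx : PiTensorProduct.tprod K (Function.update w i (b i 1)) ∈ segreTangent K V w :=
      Submodule.subset_span ⟨i, b i 1, rfl⟩
    rw [← h] at hx
    have h0 := tcoord_vanish V b v hb f hij (by simp [hf]) (by simp [hf, hij.symm, hj]) hx
    rw [tcoord_tprod] at h0
    refine absurd h0 (Finset.prod_ne_zero_iff.mpr fun m _ => ?_)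
    rcases eq_or_ne m i with rfl | hmi
    · rw [Function.update_self, (b m).repr_self]
      simp [hf]
    · rw [Function.update_of_ne hmi]
      by_cases hcm : (b m).repr (w m) 1 = 0
      · have hfm : f m = 0 := by simp [hf, hmi, hcm]
        rw [hfm]
        intro h0'
        apply hw m
        have hz : (b m).repr (w m) = 0 := by
          ext j'
          fin_cases j' <;> simpa using (by first | exact h0' | exact hcm)
        exact ((b m).repr.map_eq_zero_iff).mp hz
      · have hfm : f m = 1 := by simp [hf, hmi, hcm]
        rw [hfm]
        exact hcm
  -- Step 2: hence each `w m` is a multiple of `v m`.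
  have hwm : ∀ m, w m = ((b m).repr (w m) 0) • v m := by
    intro m
    conv_lhs => rw [← (b m).sum_repr (w m)]
    rw [Fin.sum_univ_two, hc, zero_smul, add_zero, hb]
  refine ⟨∏ m, (b m).repr (w m) 0, ?_⟩
  rw [← MultilinearMap.map_smul_univ (PiTensorProduct.tprod K)
    (fun m => (b m).repr (w m) 0) v]
  exact congrArg _ (funext hwm)
end

section
/- Let W = V_1' ⊗ ... ⊗ V_k' ⊆ V_1 ⊗ ... ⊗ V_k where V_i' ⊆ V_i are subspaces, and let p = v_1 ⊗ ... ⊗ v_k with v_i ∈ V_i' for all i. Then the affine tangent space to the Segre cone of W at p is the intersection of W with the affine tangent space to the Segre cone of V_1 ⊗ ... ⊗ V_k at p; equivalently, Σ_i v_1⊗...⊗V_i'⊗...⊗v_k = W ∩ (Σ_i v_1⊗...⊗V_i⊗...⊗v_k). -/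
open scoped TensorProduct
open Module

/-- let `W = V₁' ⊗ ... ⊗ V_k' ⊆ V₁ ⊗ ... ⊗ V_k` (realized inside the
big tensor product as the span of the simple tensors with all entries in the
subspaces `V i' ⊆ V i`), and let `p = v₁ ⊗ ... ⊗ v_k` be a nonzero simple tensor with
`v i ∈ V i'` for all `i`.  Then the affine tangent space to the Segre cone of `W` at
`p` (the span of the tensors obtained by replacing one factor `v i` by a vector of
`V i'`) equals `W ∩ T_p`, where `T_p` is the affine tangent space to the Segre cone
of `V₁ ⊗ ... ⊗ V_k` at `p`. -/
theorem stmt15 {K : Type*} [Field K] {k : ℕ}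
    (V : Fin k → Type*) [∀ i, AddCommGroup (V i)] [∀ i, Module K (V i)]
    (V' : ∀ i, Submodule K (V i))
    (v : ∀ i, V i) (hv : ∀ i, v i ∈ V' i) (hv0 : ∀ i, v i ≠ 0) :
    Submodule.span K
        {t | ∃ (i : Fin k) (w : V i), w ∈ V' i
          ∧ t = PiTensorProduct.tprod K (Function.update v i w)}
      = (Submodule.span K
          {t | ∃ u : ∀ i, V i, (∀ i, u i ∈ V' i)
            ∧ t = PiTensorProduct.tprod K u})
        ⊓ segreTangent K V v := by
  -- choose complements and projections onto V' i fixing V' i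
  choose C hC using fun i => Submodule.exists_isCompl (V' i)
  set π : ∀ i, V i →ₗ[K] V i :=
    fun i => (V' i).subtype ∘ₗ Submodule.linearProjOfIsCompl (V' i) (C i) (hC i) with hπ
  have hπmem : ∀ i x, π i x ∈ V' i := fun i x => ((Submodule.linearProjOfIsCompl
    (V' i) (C i) (hC i)) x).2
  have hπfix : ∀ i x, x ∈ V' i → π i x = x := by
    intro i x hx
    have h := Submodule.linearProjOfIsCompl_apply_left (hC i) ⟨x, hx⟩
    simp only [hπ, LinearMap.comp_apply, Submodule.subtype_apply, h]
    exact congrArg Subtype.val h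
  set P : (⨂[K] i, V i) →ₗ[K] (⨂[K] i, V i) := PiTensorProduct.map π with hP
  have hPtprod : ∀ u : ∀ i, V i,
      P (PiTensorProduct.tprod K u) = PiTensorProduct.tprod K (fun i => π i (u i)) := by
    intro u; simp [hP]
  apply le_antisymm
  · -- easy inclusion
    rw [le_inf_iff]
    constructor
    · apply Submodule.span_le.2
      rintro t ⟨i, w, hw, rfl⟩
      apply Submodule.subset_span
      exact ⟨Function.update v i w, fun j => by
        rcases eq_or_ne j i with rfl | h
        · simpa using hw
        · simpa [Function.update_of_ne h] using hv j, rfl⟩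
    · apply Submodule.span_le.2
      rintro t ⟨i, w, hw, rfl⟩
      exact Submodule.subset_span ⟨i, w, rfl⟩
  · rintro t ⟨htW, htT⟩
    -- P fixes W pointwise
    have hfix : P t = t := by
      have : Submodule.span K {t | ∃ u : ∀ i, V i, (∀ i, u i ∈ V' i)
          ∧ t = PiTensorProduct.tprod K u} ≤ LinearMap.ker (P - LinearMap.id) := by
        apply Submodule.span_le.2
        rintro s ⟨u, hu, rfl⟩
        simp only [SetLike.mem_coe, LinearMap.mem_ker, LinearMap.sub_apply, LinearMap.id_apply, sub_eq_zero]
        rw [hPtprod]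
        congr 1
        funext i
        exact hπfix i (u i) (hu i)
      have h2 := this htW
      rw [LinearMap.mem_ker, LinearMap.sub_apply, LinearMap.id_apply, sub_eq_zero] at h2
      exact h2
    -- P maps T_p into the LHS
    have hmap : segreTangent K V v ≤ (Submodule.span K
        {t | ∃ (i : Fin k) (w : V i), w ∈ V' i
          ∧ t = PiTensorProduct.tprod K (Function.update v i w)}).comap P := by
      apply Submodule.span_le.2
      rintro s ⟨i, w, rfl⟩
      simp only [SetLike.mem_coe, Submodule.mem_comap]
      rw [hPtprod]
      apply Submodule.subset_span
      have hfun : (fun j => π j (Function.update v i w j)) = Function.update v i (π i w) := by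
        funext j
        rcases eq_or_ne j i with rfl | h
        · simp
        · simp [Function.update_of_ne h, hπfix j (v j) (hv j)]
      exact ⟨i, π i w, hπmem i w, by rw [hfun]⟩
    have := hmap htT
    rw [Submodule.mem_comap, hfix] at this
    exact this
end

section
/- Let V_1, V_2 be 2-dimensional and V_3 be 2-dimensional vector spaces over an algebraically closed field of characteristic 0 (so the Segre is P^1 × P^1 × P^1). Let u = u_1⊗u_2⊗u_3, v = v_1⊗v_2⊗v_3, o = o_1⊗o_2⊗o_3 be simple tensors with u_3 proportional to v_3, o_3 not proportional to u_3, u_1 proportional to o_1, v_2 proportional to o_2, and u_i not proportional to v_i for i = 1, 2. Then the sum of the three affine tangent spaces to the Segre cone at u, v, o has dimension exactly 7 (codimension 1 in the 8-dimensional space). -/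
open scoped TensorProduct
open Module

/-- `V₁, V₂, V₃` two-dimensional over an algebraically closed field of
characteristic `0` (the Segre of `P^1 × P^1 × P^1`); simple tensors `u = u₁⊗u₂⊗u₃`,
`v = v₁⊗v₂⊗v₃`, `o = o₁⊗o₂⊗o₃` with `u₃ ∝ v₃`, `o₃ ∦ u₃`, `u₁ ∝ o₁`, `v₂ ∝ o₂`, and
`uᵢ ∦ vᵢ` for `i = 1, 2`.  Then the sum of the three affine tangent spaces to the
Segre cone at `u, v, o` has dimension exactly `7`. -/
theorem stmt17 {K V1 V2 V3 : Type*} [Field K] [IsAlgClosed K] [CharZero K]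
    [AddCommGroup V1] [Module K V1] [FiniteDimensional K V1]
    [AddCommGroup V2] [Module K V2] [FiniteDimensional K V2]
    [AddCommGroup V3] [Module K V3] [FiniteDimensional K V3]
    (h1 : finrank K V1 = 2) (h2 : finrank K V2 = 2) (h3 : finrank K V3 = 2)
    (u1 v1 o1 : V1) (u2 v2 o2 : V2) (u3 v3 o3 : V3)
    (hv3 : v3 ≠ 0) (ho1 : o1 ≠ 0) (ho2 : o2 ≠ 0)
    (h34 : ∃ c : K, v3 = c • u3)
    (hind3 : LinearIndependent K ![u3, o3])
    (h1prop : ∃ c : K, o1 = c • u1)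
    (h2prop : ∃ c : K, o2 = c • v2)
    (hind1 : LinearIndependent K ![u1, v1])
    (hind2 : LinearIndependent K ![u2, v2]) :
    finrank K
        ↥(segreTangent3 K u1 u2 u3 ⊔ segreTangent3 K v1 v2 v3
            ⊔ segreTangent3 K o1 o2 o3) = 7 := by
  classical
  obtain ⟨c, hc⟩ := h34
  obtain ⟨a, ha⟩ := h1prop
  obtain ⟨b, hb⟩ := h2prop
  have hcne : c ≠ 0 := by rintro rfl; simp at hc; exact hv3 hc
  have hane : a ≠ 0 := by rintro rfl; simp at ha; exact ho1 ha
  have card2 : Fintype.card (Fin 2) = 2 := by simp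
  let B1 : Basis (Fin 2) K V1 :=
    basisOfLinearIndependentOfCardEqFinrank hind1 (card2.trans h1.symm)
  let B2 : Basis (Fin 2) K V2 :=
    basisOfLinearIndependentOfCardEqFinrank hind2 (card2.trans h2.symm)
  let B3 : Basis (Fin 2) K V3 :=
    basisOfLinearIndependentOfCardEqFinrank hind3 (card2.trans h3.symm)
  have hB1 : ⇑B1 = ![u1, v1] := coe_basisOfLinearIndependentOfCardEqFinrank _ _
  have hB2 : ⇑B2 = ![u2, v2] := coe_basisOfLinearIndependentOfCardEqFinrank _ _
  have hB3 : ⇑B3 = ![u3, o3] := coe_basisOfLinearIndependentOfCardEqFinrank _ _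
  have hco1 : ∀ w : V1, ∃ p q : K, p • u1 + q • v1 = w := by
    intro w
    have hmem : w ∈ Submodule.span K ({u1, v1} : Set V1) := by
      have hs := B1.span_eq
      have hr : Set.range ⇑B1 = {u1, v1} := by
        rw [hB1]; ext x; simp [Matrix.range_cons, Matrix.range_empty]; tauto
      rw [hr] at hs
      rw [hs]; trivial
    exact Submodule.mem_span_pair.mp hmem
  have hco2 : ∀ w : V2, ∃ p q : K, p • u2 + q • v2 = w := by
    intro w
    have hmem : w ∈ Submodule.span K ({u2, v2} : Set V2) := by
      have hs := B2.span_eq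
      have hr : Set.range ⇑B2 = {u2, v2} := by
        rw [hB2]; ext x; simp [Matrix.range_cons, Matrix.range_empty]; tauto
      rw [hr] at hs
      rw [hs]; trivial
    exact Submodule.mem_span_pair.mp hmem
  have hco3 : ∀ w : V3, ∃ p q : K, p • u3 + q • o3 = w := by
    intro w
    have hmem : w ∈ Submodule.span K ({u3, o3} : Set V3) := by
      have hs := B3.span_eq
      have hr : Set.range ⇑B3 = {u3, o3} := by
        rw [hB3]; ext x; simp [Matrix.range_cons, Matrix.range_empty]; tauto
      rw [hr] at hs
      rw [hs]; trivial
    exact Submodule.mem_span_pair.mp hmem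
  let E : Fin 7 → V1 ⊗[K] (V2 ⊗[K] V3) :=
    ![u1 ⊗ₜ (u2 ⊗ₜ u3), v1 ⊗ₜ (u2 ⊗ₜ u3), u1 ⊗ₜ (v2 ⊗ₜ u3), u1 ⊗ₜ (u2 ⊗ₜ o3),
      v1 ⊗ₜ (v2 ⊗ₜ u3), v1 ⊗ₜ (v2 ⊗ₜ o3), u1 ⊗ₜ (v2 ⊗ₜ o3)]
  have hEmem : ∀ i, E i ∈ Submodule.span K (Set.range E) :=
    fun i => Submodule.subset_span ⟨i, rfl⟩
  set S := Submodule.span K (Set.range E) with hS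
  have key : segreTangent3 K u1 u2 u3 ⊔ segreTangent3 K v1 v2 v3
      ⊔ segreTangent3 K o1 o2 o3 = S := by
    apply le_antisymm
    · refine sup_le (sup_le ?_ ?_) ?_ <;> unfold segreTangent3 <;>
        refine sup_le (sup_le ?_ ?_) ?_ <;> rw [Submodule.span_le] <;>
        rintro x ⟨w, rfl⟩
      · obtain ⟨p, q, hw⟩ := hco1 w
        rw [← hw]
        simp only [TensorProduct.add_tmul, TensorProduct.tmul_add,
          ← TensorProduct.smul_tmul', TensorProduct.tmul_smul, smul_add, smul_smul]
        exact add_mem (Submodule.smul_mem _ _ (hEmem 0)) (Submodule.smul_mem _ _ (hEmem 1))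
      · obtain ⟨p, q, hw⟩ := hco2 w
        rw [← hw]
        simp only [TensorProduct.add_tmul, TensorProduct.tmul_add,
          ← TensorProduct.smul_tmul', TensorProduct.tmul_smul, smul_add, smul_smul]
        exact add_mem (Submodule.smul_mem _ _ (hEmem 0)) (Submodule.smul_mem _ _ (hEmem 2))
      · obtain ⟨p, q, hw⟩ := hco3 w
        rw [← hw]
        simp only [TensorProduct.add_tmul, TensorProduct.tmul_add,
          ← TensorProduct.smul_tmul', TensorProduct.tmul_smul, smul_add, smul_smul]
        exact add_mem (Submodule.smul_mem _ _ (hEmem 0)) (Submodule.smul_mem _ _ (hEmem 3))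
      · obtain ⟨p, q, hw⟩ := hco1 w
        rw [← hw]
        simp only [hc, TensorProduct.add_tmul, TensorProduct.tmul_add,
          ← TensorProduct.smul_tmul', TensorProduct.tmul_smul, smul_add, smul_smul]
        exact add_mem (Submodule.smul_mem _ _ (hEmem 2)) (Submodule.smul_mem _ _ (hEmem 4))
      · obtain ⟨p, q, hw⟩ := hco2 w
        rw [← hw]
        simp only [hc, TensorProduct.add_tmul, TensorProduct.tmul_add,
          ← TensorProduct.smul_tmul', TensorProduct.tmul_smul, smul_add, smul_smul]
        exact add_mem (Submodule.smul_mem _ _ (hEmem 1)) (Submodule.smul_mem _ _ (hEmem 4))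
      · obtain ⟨p, q, hw⟩ := hco3 w
        rw [← hw]
        simp only [TensorProduct.add_tmul, TensorProduct.tmul_add,
          ← TensorProduct.smul_tmul', TensorProduct.tmul_smul, smul_add, smul_smul]
        exact add_mem (Submodule.smul_mem _ _ (hEmem 4)) (Submodule.smul_mem _ _ (hEmem 5))
      · obtain ⟨p, q, hw⟩ := hco1 w
        rw [← hw]
        simp only [hb, TensorProduct.add_tmul, TensorProduct.tmul_add,
          ← TensorProduct.smul_tmul', TensorProduct.tmul_smul, smul_add, smul_smul]
        exact add_mem (Submodule.smul_mem _ _ (hEmem 6)) (Submodule.smul_mem _ _ (hEmem 5))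
      · obtain ⟨p, q, hw⟩ := hco2 w
        rw [← hw]
        simp only [ha, TensorProduct.add_tmul, TensorProduct.tmul_add,
          ← TensorProduct.smul_tmul', TensorProduct.tmul_smul, smul_add, smul_smul]
        exact add_mem (Submodule.smul_mem _ _ (hEmem 3)) (Submodule.smul_mem _ _ (hEmem 6))
      · obtain ⟨p, q, hw⟩ := hco3 w
        rw [← hw]
        simp only [ha, hb, TensorProduct.add_tmul, TensorProduct.tmul_add,
          ← TensorProduct.smul_tmul', TensorProduct.tmul_smul, smul_add, smul_smul]
        exact add_mem (Submodule.smul_mem _ _ (hEmem 2)) (Submodule.smul_mem _ _ (hEmem 6))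
    · rw [hS, Submodule.span_le]
      rintro x ⟨i, rfl⟩
      have mem1 : ∀ y, y ∈ segreTangent3 K u1 u2 u3 →
          y ∈ segreTangent3 K u1 u2 u3 ⊔ segreTangent3 K v1 v2 v3 ⊔ segreTangent3 K o1 o2 o3 :=
        fun y hy => Submodule.mem_sup_left (Submodule.mem_sup_left hy)
      have mem2 : ∀ y, y ∈ segreTangent3 K v1 v2 v3 →
          y ∈ segreTangent3 K u1 u2 u3 ⊔ segreTangent3 K v1 v2 v3 ⊔ segreTangent3 K o1 o2 o3 :=
        fun y hy => Submodule.mem_sup_left (Submodule.mem_sup_right hy)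
      have mem3 : ∀ y, y ∈ segreTangent3 K o1 o2 o3 →
          y ∈ segreTangent3 K u1 u2 u3 ⊔ segreTangent3 K v1 v2 v3 ⊔ segreTangent3 K o1 o2 o3 :=
        fun y hy => Submodule.mem_sup_right hy
      have g1 : ∀ (a' : V1) (b' : V2) (c' : V3) (w : V1),
          w ⊗ₜ[K] (b' ⊗ₜ[K] c') ∈ segreTangent3 K a' b' c' := fun a' b' c' w =>
        Submodule.mem_sup_left (Submodule.mem_sup_left (Submodule.subset_span ⟨w, rfl⟩))
      have g2 : ∀ (a' : V1) (b' : V2) (c' : V3) (w : V2),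
          a' ⊗ₜ[K] (w ⊗ₜ[K] c') ∈ segreTangent3 K a' b' c' := fun a' b' c' w =>
        Submodule.mem_sup_left (Submodule.mem_sup_right (Submodule.subset_span ⟨w, rfl⟩))
      have g3 : ∀ (a' : V1) (b' : V2) (c' : V3) (w : V3),
          a' ⊗ₜ[K] (b' ⊗ₜ[K] w) ∈ segreTangent3 K a' b' c' := fun a' b' c' w =>
        Submodule.mem_sup_right (Submodule.subset_span ⟨w, rfl⟩)
      fin_cases i
      · exact mem1 _ (g1 u1 u2 u3 u1)
      · exact mem1 _ (g1 u1 u2 u3 v1)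
      · exact mem1 _ (g2 u1 u2 u3 v2)
      · exact mem1 _ (g3 u1 u2 u3 o3)
      · show v1 ⊗ₜ[K] (v2 ⊗ₜ[K] u3) ∈ _
        have heq : (v1 ⊗ₜ[K] (v2 ⊗ₜ[K] u3) : V1 ⊗[K] (V2 ⊗[K] V3))
            = c⁻¹ • (v1 ⊗ₜ[K] (v2 ⊗ₜ[K] v3)) := by
          rw [hc, TensorProduct.tmul_smul, TensorProduct.tmul_smul, smul_smul,
            inv_mul_cancel₀ hcne, one_smul]
        rw [heq]
        exact Submodule.smul_mem _ _ (mem2 _ (g3 v1 v2 v3 v3))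
      · exact mem2 _ (g3 v1 v2 v3 o3)
      · show u1 ⊗ₜ[K] (v2 ⊗ₜ[K] o3) ∈ _
        have heq : (u1 ⊗ₜ[K] (v2 ⊗ₜ[K] o3) : V1 ⊗[K] (V2 ⊗[K] V3))
            = a⁻¹ • (o1 ⊗ₜ[K] (v2 ⊗ₜ[K] o3)) := by
          rw [ha, ← TensorProduct.smul_tmul', smul_smul, inv_mul_cancel₀ hane, one_smul]
        rw [heq]
        exact Submodule.smul_mem _ _ (mem3 _ (g2 o1 o2 o3 v2))
  rw [key, hS]
  let B : Basis (Fin 2 × Fin 2 × Fin 2) K (V1 ⊗[K] (V2 ⊗[K] V3)) :=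
    B1.tensorProduct (B2.tensorProduct B3)
  let f : Fin 7 → Fin 2 × Fin 2 × Fin 2 :=
    ![(0,0,0), (1,0,0), (0,1,0), (0,0,1), (1,1,0), (1,1,1), (0,1,1)]
  have hf : Function.Injective f := by decide
  have hEf : E = B ∘ f := by
    funext i
    fin_cases i <;>
      simp [E, B, f, Basis.tensorProduct_apply, Basis.tensorProduct_apply', hB1, hB2, hB3] <;> rfl
  rw [hEf]
  rw [finrank_span_eq_card ((B.linearIndependent).comp f hf)]
  simp
end
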